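/- If ε > 0 and n is a natural number with n > ln(16)/ε², then n − log₂ |I(n,ε)| ≤ (3/ln 2) · exp(−ε²·n/2). In particular, the entropy log₂ |I(n,ε)| of the uniform distribution on I(n,ε) is exponentially close to n. -/
import Mathlib

/-- Hamming weight of a bitstring. -/
def wt {n : ℕ} (y : Fin n → Bool) : ℕ := (Finset.univ.filter fun k => y k = true).card

/-- The set `I(n,ε)` of `n`-bit strings whose Hamming weight `w` satisfies
`|w/n - 1/2| ≤ ε/2`. -/
noncomputable def Iset (n : ℕ) (ε : ℝ) : Finset (Fin n → Bool) :=
  Finset.univ.filter fun y => |((wt y : ℝ) / n) - 1 / 2| ≤ ε / 2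

lemma wt_sum (n : ℕ) (y : Fin n → Bool) :
    (∑ k : Fin n, (if y k = true then (1:ℝ) else -1)) = 2 * (wt y : ℝ) - n := by
  have h : ∀ k : Fin n, (if y k = true then (1:ℝ) else -1)
      = 2 * (if y k = true then (1:ℝ) else 0) - 1 := by
    intro k; by_cases h : y k = true <;> simp [h] <;> norm_num
  simp only [h]
  rw [Finset.sum_sub_distrib, ← Finset.mul_sum, Finset.sum_boole]
  simp [wt]

lemma exp_sum_eq (n : ℕ) (c : ℝ) :
    ∑ y : Fin n → Bool, Real.exp (c * (2 * (wt y : ℝ) - n))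
      = (Real.exp c + Real.exp (-c)) ^ n := by
  have h : ∀ y : Fin n → Bool, Real.exp (c * (2 * (wt y : ℝ) - n))
      = ∏ k : Fin n, Real.exp (c * (if y k = true then (1:ℝ) else -1)) := by
    intro y
    rw [← Real.exp_sum, ← Finset.mul_sum, wt_sum]
  simp only [h]
  rw [← Fintype.piFinset_univ,
    Finset.sum_prod_piFinset (Finset.univ : Finset Bool)
      (fun (_ : Fin n) (b : Bool) => Real.exp (c * (if b = true then (1:ℝ) else -1)))]
  simp [Finset.prod_const]

lemma tail_bound (n : ℕ) (c : ℝ) :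
    ((Finset.univ.filter fun y : Fin n → Bool =>
        c ^ 2 * n ≤ c * (2 * (wt y : ℝ) - n)).card : ℝ)
      ≤ 2 ^ n * Real.exp (-(c ^ 2) * n / 2) := by
  set A := Finset.univ.filter fun y : Fin n → Bool =>
      c ^ 2 * n ≤ c * (2 * (wt y : ℝ) - n) with hA
  have h1 : (A.card : ℝ) ≤ ∑ y ∈ A, Real.exp (c * (2 * (wt y : ℝ) - n) - c ^ 2 * n) := by
    rw [Finset.card_eq_sum_ones A]
    push_cast
    apply Finset.sum_le_sum
    intro y hy
    have := (Finset.mem_filter.mp hy).2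
    exact Real.one_le_exp (by linarith)
  have h2 : ∑ y ∈ A, Real.exp (c * (2 * (wt y : ℝ) - n) - c ^ 2 * n)
      ≤ ∑ y : Fin n → Bool, Real.exp (c * (2 * (wt y : ℝ) - n) - c ^ 2 * n) := by
    apply Finset.sum_le_sum_of_subset_of_nonneg (Finset.subset_univ _)
    intro y _ _; positivity
  have h3 : ∑ y : Fin n → Bool, Real.exp (c * (2 * (wt y : ℝ) - n) - c ^ 2 * n)
      = (Real.exp c + Real.exp (-c)) ^ n * Real.exp (-(c ^ 2 * n)) := by
    have he : ∀ y : Fin n → Bool, Real.exp (c * (2 * (wt y : ℝ) - n) - c ^ 2 * n)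
        = Real.exp (c * (2 * (wt y : ℝ) - n)) * Real.exp (-(c ^ 2 * n)) := by
      intro y; rw [← Real.exp_add, sub_eq_add_neg]
    simp only [he]
    rw [← Finset.sum_mul, exp_sum_eq]
  have h4 : (Real.exp c + Real.exp (-c)) ^ n ≤ 2 ^ n * Real.exp (n * (c ^ 2 / 2)) := by
    have hc : Real.exp c + Real.exp (-c) = 2 * Real.cosh c := by
      rw [Real.cosh_eq]; ring
    have hp : Real.cosh c ^ n ≤ Real.exp (c ^ 2 / 2) ^ n :=
      pow_le_pow_left₀ (le_of_lt (Real.cosh_pos c)) (Real.cosh_le_exp_half_sq c) n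
    rw [← Real.exp_nat_mul] at hp
    rw [hc, mul_pow]
    exact mul_le_mul_of_nonneg_left hp (by positivity)
  calc (A.card : ℝ) ≤ (Real.exp c + Real.exp (-c)) ^ n * Real.exp (-(c ^ 2 * n)) := by
        rw [← h3]; exact h1.trans h2
    _ ≤ 2 ^ n * Real.exp (n * (c ^ 2 / 2)) * Real.exp (-(c ^ 2 * n)) := by
        exact mul_le_mul_of_nonneg_right h4 (Real.exp_nonneg _)
    _ = 2 ^ n * Real.exp (-(c ^ 2) * n / 2) := by
        have he2 : (n:ℝ) * (c ^ 2 / 2) + -(c ^ 2 * n) = -(c ^ 2) * n / 2 := by ring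
        rw [mul_assoc, ← Real.exp_add, he2]

lemma log_one_sub_ge (x : ℝ) (h0 : 0 ≤ x) (h1 : x ≤ 1/2) :
    -(3/2) * x ≤ Real.log (1 - x) := by
  rw [Real.le_log_iff_exp_le (by linarith)]
  have hq : 1 + (3/2) * x + ((3/2) * x) ^ 2 / 2 ≤ Real.exp ((3/2) * x) :=
    Real.quadratic_le_exp_of_nonneg (by positivity)
  have hpos : (0:ℝ) < 1 + (3/2) * x + ((3/2) * x) ^ 2 / 2 := by positivity
  have : Real.exp (-(3/2) * x) ≤ (1 + (3/2) * x + ((3/2) * x) ^ 2 / 2)⁻¹ := by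
    rw [show (-(3/2) * x) = -((3/2) * x) by ring, Real.exp_neg]
    exact inv_anti₀ hpos hq
  refine this.trans ?_
  rw [inv_le_iff_one_le_mul₀ hpos] -- maybe wrong name
  nlinarith

/-- If `ε > 0` and `n > ln(16)/ε²`, then
`n − log₂ |I(n,ε)| ≤ (3/ln 2) · exp(−ε²n/2)`: the entropy of the uniform
distribution on `I(n,ε)` is exponentially close to `n`. -/
theorem entropy_Iset_close_to_n (n : ℕ) (ε : ℝ) (hε : 0 < ε)
    (hn : Real.log 16 / ε ^ 2 < (n : ℝ)) :
    (n : ℝ) - Real.logb 2 ((Iset n ε).card) ≤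
      3 / Real.log 2 * Real.exp (-(ε ^ 2) * n / 2) := by
  have h16 : (0:ℝ) < Real.log 16 := Real.log_pos (by norm_num)
  have hε2 : (0:ℝ) < ε ^ 2 := by positivity
  have hnpos : (0:ℝ) < n := lt_trans (by positivity) hn
  have hεn : Real.log 16 < ε ^ 2 * n := by
    rw [div_lt_iff₀ hε2] at hn; linarith [hn]
  have h164 : Real.log 16 = 2 * Real.log 4 := by
    rw [show (16:ℝ) = 4 ^ 2 by norm_num, Real.log_pow]; push_cast; ring
  set E := Real.exp (-(ε ^ 2) * n / 2) with hE
  have hEpos : 0 < E := Real.exp_pos _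
  have hE4 : E < 1 / 4 := by
    have : -(ε ^ 2) * n / 2 < -Real.log 4 := by rw [h164] at hεn; linarith
    calc E < Real.exp (-Real.log 4) := Real.exp_lt_exp.mpr this
      _ = 1 / 4 := by rw [Real.exp_neg, Real.exp_log (by norm_num)]; norm_num
  set x := 2 * E with hxdef
  have hx0 : 0 < x := by positivity
  have hx2 : x < 1 / 2 := by rw [hxdef]; linarith
  -- tail sets
  set Ap := Finset.univ.filter fun y : Fin n → Bool =>
      ε ^ 2 * n ≤ ε * (2 * (wt y : ℝ) - n) with hAp
  set Am := Finset.univ.filter fun y : Fin n → Bool =>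
      ε ^ 2 * n ≤ (-ε) * (2 * (wt y : ℝ) - n) with hAm
  have hApcard : (Ap.card : ℝ) ≤ 2 ^ n * E := tail_bound n ε
  have hAmcard : (Am.card : ℝ) ≤ 2 ^ n * E := by
    have := tail_bound n (-ε)
    rwa [neg_sq] at this
  have hsub : Finset.univ \ Iset n ε ⊆ Ap ∪ Am := by
    intro y hy
    rw [Finset.mem_sdiff] at hy
    have hy2 : ε / 2 < |((wt y : ℝ) / n) - 1 / 2| := by
      have := hy.2
      simp only [Iset, Finset.mem_filter, Finset.mem_univ, true_and, not_le] at this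
      exact this
    set w := (wt y : ℝ) with hw
    have hwn : w / n * n = w := div_mul_cancel₀ _ (ne_of_gt hnpos)
    rw [lt_abs] at hy2
    rcases hy2 with h | h
    · apply Finset.mem_union_left
      rw [hAp, Finset.mem_filter]
      refine ⟨Finset.mem_univ _, ?_⟩
      have h2 : ε * n < 2 * w - n := by
        have := mul_lt_mul_of_pos_right h hnpos
        rw [sub_mul, hwn] at this; linarith
      nlinarith [mul_lt_mul_of_pos_left h2 hε]
    · apply Finset.mem_union_right
      rw [hAm, Finset.mem_filter]
      refine ⟨Finset.mem_univ _, ?_⟩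
      have h2 : ε * n < n - 2 * w := by
        have := mul_lt_mul_of_pos_right h hnpos
        rw [neg_mul, sub_mul, hwn] at this; linarith
      nlinarith [mul_lt_mul_of_pos_left h2 hε]
  have hcompcard : ((Finset.univ \ Iset n ε).card : ℝ) ≤ 2 ^ n * x := by
    calc ((Finset.univ \ Iset n ε).card : ℝ)
        ≤ ((Ap ∪ Am).card : ℝ) := by exact_mod_cast Finset.card_le_card hsub
      _ ≤ (Ap.card : ℝ) + (Am.card : ℝ) := by exact_mod_cast Finset.card_union_le Ap Am
      _ ≤ 2 ^ n * E + 2 ^ n * E := by linarith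
      _ = 2 ^ n * x := by rw [hxdef]; ring
  have hunivcard : (Finset.univ : Finset (Fin n → Bool)).card = 2 ^ n := by
    simp [Finset.card_univ]
  have hIcard : 2 ^ n * (1 - x) ≤ ((Iset n ε).card : ℝ) := by
    have hsd : (Finset.univ \ Iset n ε).card = 2 ^ n - (Iset n ε).card := by
      rw [Finset.card_sdiff_of_subset (Finset.subset_univ _), hunivcard]
    have hle : (Iset n ε).card ≤ 2 ^ n := by
      rw [← hunivcard]; exact Finset.card_le_card (Finset.subset_univ _)
    have : ((Finset.univ \ Iset n ε).card : ℝ) = 2 ^ n - ((Iset n ε).card : ℝ) := by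
      rw [hsd, Nat.cast_sub hle]; push_cast; ring
    rw [this] at hcompcard
    nlinarith
  have hIpos : (0:ℝ) < ((Iset n ε).card : ℝ) := by
    have : (0:ℝ) < 2 ^ n * (1 - x) := by
      have : (0:ℝ) < 2 ^ n := by positivity
      nlinarith
    linarith
  have hlog2 : (0:ℝ) < Real.log 2 := Real.log_pos (by norm_num)
  have hlb : (n : ℝ) + Real.log (1 - x) / Real.log 2 ≤ Real.logb 2 ((Iset n ε).card) := by
    have hq : (0:ℝ) < 2 ^ n * (1 - x) := by
      have h2n : (0:ℝ) < 2 ^ n := by positivity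
      nlinarith
    have hstep : Real.logb 2 (2 ^ n * (1 - x)) ≤ Real.logb 2 ((Iset n ε).card) :=
      Real.logb_le_logb_of_le (by norm_num) hq hIcard
    have heq : Real.logb 2 (2 ^ n * (1 - x)) = (n : ℝ) + Real.log (1 - x) / Real.log 2 := by
      have h1x : (0:ℝ) < 1 - x := by linarith
      rw [Real.logb_mul (by positivity) (ne_of_gt h1x), Real.logb_pow,
        Real.logb_self_eq_one (by norm_num : (1:ℝ) < 2), Real.logb]
      ring
    rw [← heq]; exact hstep
  have hlog1x : -(3/2) * x ≤ Real.log (1 - x) := log_one_sub_ge x hx0.le hx2.le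
  have hfin : (n : ℝ) - Real.logb 2 ((Iset n ε).card) ≤ (3/2) * x / Real.log 2 := by
    have : -((3/2) * x) / Real.log 2 ≤ Real.log (1 - x) / Real.log 2 := by
      apply div_le_div_of_nonneg_right ?_ hlog2.le
      · linarith
    rw [neg_div] at this
    linarith
  calc (n : ℝ) - Real.logb 2 ((Iset n ε).card) ≤ (3/2) * x / Real.log 2 := hfin
    _ = 3 / Real.log 2 * E := by rw [hxdef]; ring
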